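/- arXiv:1901.06377 — 2 statements merged into one kernel-verified Lean document; each statement's English description precedes it below -/
import Mathlib

section
/- For all integers k ≥ 2 and all reals a ≥ 4√(ln k / k), we have e^{-(k/2)(a − 1/k)²}·√(a·k) ≤ 2·(ln k / k⁷)^{1/4} < 1. In particular e^{-(k/2)(a−1/k)²}√(ak) < 1. -/
open Real

set_option maxHeartbeats 1000000

/-- For integers `k ≥ 2` and reals `a ≥ 4√(ln k / k)`,
`e^{-(k/2)(a − 1/k)²}√(ak) ≤ 2(ln k / k⁷)^{1/4} < 1`. -/
theorem boundary_max_bound (k : ℕ) (hk : 2 ≤ k) (a : ℝ)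
    (ha : 4 * Real.sqrt (Real.log k / k) ≤ a) :
    Real.exp (-((k : ℝ) / 2) * (a - 1 / k) ^ 2) * Real.sqrt (a * k) ≤
        2 * (Real.log k / (k : ℝ) ^ 7) ^ ((1 : ℝ) / 4) ∧
      2 * (Real.log k / (k : ℝ) ^ 7) ^ ((1 : ℝ) / 4) < 1 := by
  have hk2 : (2:ℝ) ≤ (k:ℝ) := by exact_mod_cast hk
  have hk0 : (0:ℝ) < (k:ℝ) := by linarith
  set L := Real.log k with hLdef
  have hL : (0.6:ℝ) ≤ L := by
    have h2 : Real.log 2 ≤ L := Real.log_le_log (by norm_num) hk2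
    have := Real.log_two_gt_d9
    linarith
  have hL0 : (0:ℝ) < L := by linarith
  have hLk7 : (0:ℝ) ≤ L / (k:ℝ)^7 := by positivity
  clear_value L
  constructor
  · -- main inequality
    set s := Real.sqrt (L / (k:ℝ)) with hsdef
    have hs0 : 0 < s := Real.sqrt_pos.mpr (by positivity)
    have hs2 : s ^ 2 = L / k := Real.sq_sqrt (by positivity)
    clear_value s
    have hsk2 : (s * k) ^ 2 = L * k := by
      have : (s * k) ^ 2 = s ^ 2 * k ^ 2 := by ring
      rw [this, hs2]; field_simp
    have hLk : (1.2:ℝ) ≤ L * k :=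
      calc (1.2:ℝ) = 0.6 * 2 := by norm_num
        _ ≤ L * k := mul_le_mul hL hk2 (by norm_num) (by linarith)
    have hsk : 1 ≤ s * k := by nlinarith [sq_nonneg (s * k - 1), mul_pos hs0 hk0]
    set t := a - 1 / (k:ℝ) with htdef
    have hts : 3 * s ≤ t := by
      have h1k : 1 / (k:ℝ) ≤ s := by
        rw [div_le_iff₀ hk0]; linarith
      rw [htdef]; linarith
    have hak : a * k = t * k + 1 := by
      rw [htdef]; field_simp; ring
    have e1 : Real.exp (-((k:ℝ) / 2) * t ^ 2) ^ 4
        = Real.exp (-(2 * ((k:ℝ) * t ^ 2))) := by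
      rw [← Real.exp_nat_mul]; congr 1; push_cast; ring
    clear_value t
    clear htdef hsdef ha
    have ht0 : 0 < t := by linarith
    have ht2 : 9 * s ^ 2 ≤ t ^ 2 := by nlinarith [hts, hs0]
    have h9L : 9 * L ≤ (k:ℝ) * t ^ 2 := by
      have h := mul_le_mul_of_nonneg_left ht2 (le_of_lt hk0)
      have hks2 : (k:ℝ) * s ^ 2 = L := by rw [hs2]; field_simp
      nlinarith [h, hks2]
    have ha0 : 0 < a := by nlinarith [mul_pos hs0 hk0]
    have htk3 : 3 ≤ t * k := by nlinarith [hsk, hts, hk0]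
    have hak43 : a * k ≤ 4 / 3 * (t * k) := by rw [hak]; linarith
    -- exponential bounds
    have hexp1 : (k:ℝ) ^ 9 ≤ Real.exp ((k:ℝ) * t ^ 2) := by
      have e9 : Real.exp (9 * L) = (k:ℝ) ^ 9 := by
        rw [show (9:ℝ) * L = ((9:ℕ):ℝ) * L by norm_num, Real.exp_nat_mul,
          hLdef, Real.exp_log hk0]
      rw [← e9]
      exact Real.exp_le_exp.mpr h9L
    have hexp2 : ((k:ℝ) * t ^ 2) ^ 2 / 4 ≤ Real.exp ((k:ℝ) * t ^ 2) := by
      set x := (k:ℝ) * t ^ 2 with hxdef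
      have hx0 : 0 ≤ x := by positivity
      clear_value x
      have h1 : x / 2 ≤ Real.exp (x / 2) := by
        have := Real.add_one_le_exp (x / 2); linarith
      have h2 : Real.exp (x / 2) ^ 2 = Real.exp x := by
        rw [sq, ← Real.exp_add]; ring_nf
      calc x ^ 2 / 4 = (x / 2) ^ 2 := by ring
        _ ≤ Real.exp (x / 2) ^ 2 := by
            apply pow_le_pow_left₀ (by positivity) h1
        _ = Real.exp x := h2
    have hE : (k:ℝ) ^ 9 * (((k:ℝ) * t ^ 2) ^ 2 / 4) ≤ Real.exp (2 * ((k:ℝ) * t ^ 2)) := by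
      rw [two_mul, Real.exp_add]
      exact mul_le_mul hexp1 hexp2 (by positivity) (le_of_lt (Real.exp_pos _))
    -- key polynomial inequality
    have hLLk : (0.72:ℝ) ≤ L * L * k :=
      calc (0.72:ℝ) = 0.36 * 2 := by norm_num
        _ ≤ (L * L) * k := mul_le_mul (by nlinarith [hL]) hk2 (by norm_num) (by positivity)
    have hc : (16 / 9 : ℝ) ≤ 4 * L * k ^ 2 * t ^ 2 := by
      have h1 : 4 * L * (k:ℝ) * (9 * L) ≤ 4 * L * (k:ℝ) * ((k:ℝ) * t ^ 2) :=
        mul_le_mul_of_nonneg_left h9L (by positivity)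
      nlinarith [h1, hLLk]
    have h1 : (a * k) ^ 2 ≤ 16 / 9 * (t * k) ^ 2 := by
      nlinarith [mul_pos ht0 hk0, mul_pos ha0 hk0, hak43]
    have key : (a * k) ^ 2 * k ^ 7 ≤ 16 * L * Real.exp (2 * ((k:ℝ) * t ^ 2)) := by
      have h2 : (16 / 9 : ℝ) * (t ^ 2 * k ^ 9) ≤ (4 * L * k ^ 2 * t ^ 2) * (t ^ 2 * k ^ 9) :=
        mul_le_mul_of_nonneg_right hc (by positivity)
      have h3 : (a * k) ^ 2 * k ^ 7 ≤ 16 * L * ((k:ℝ) ^ 9 * (((k:ℝ) * t ^ 2) ^ 2 / 4)) := by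
        nlinarith [mul_le_mul_of_nonneg_right h1 (by positivity : (0:ℝ) ≤ (k:ℝ) ^ 7), h2]
      calc (a * k) ^ 2 * k ^ 7 ≤ 16 * L * ((k:ℝ) ^ 9 * (((k:ℝ) * t ^ 2) ^ 2 / 4)) := h3
        _ ≤ 16 * L * Real.exp (2 * ((k:ℝ) * t ^ 2)) :=
            mul_le_mul_of_nonneg_left hE (by positivity)
    -- reduce to 4th powers
    have hRHS0 : (0:ℝ) ≤ 2 * (L / (k:ℝ) ^ 7) ^ ((1:ℝ)/4) := by positivity
    have e2 : Real.sqrt (a * k) ^ 4 = (a * k) ^ 2 := by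
      rw [show (4:ℕ) = 2 * 2 from rfl, pow_mul, Real.sq_sqrt (by positivity)]
    have e3 : ((L / (k:ℝ) ^ 7) ^ ((1:ℝ)/4)) ^ (4:ℕ) = L / (k:ℝ) ^ 7 := by
      rw [← Real.rpow_natCast ((L / (k:ℝ) ^ 7) ^ ((1:ℝ)/4)) 4,
        ← Real.rpow_mul hLk7]
      norm_num
    have hcore : Real.exp (-(2 * ((k:ℝ) * t ^ 2))) * (a * k) ^ 2 ≤ 16 * (L / (k:ℝ) ^ 7) := by
      have h7 : (0:ℝ) < (k:ℝ) ^ 7 := by positivity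
      rw [Real.exp_neg, inv_mul_le_iff₀ (Real.exp_pos _),
        show Real.exp (2 * ((k:ℝ) * t ^ 2)) * (16 * (L / (k:ℝ) ^ 7))
          = 16 * L * Real.exp (2 * ((k:ℝ) * t ^ 2)) / (k:ℝ) ^ 7 by field_simp,
        le_div_iff₀ h7]
      linarith [key]
    have e4 : (2 * (L / (k:ℝ) ^ 7) ^ ((1:ℝ)/4)) ^ 4 = 16 * (L / (k:ℝ) ^ 7) := by
      rw [mul_pow, e3]; norm_num
    have hpow : (Real.exp (-((k:ℝ) / 2) * t ^ 2) * Real.sqrt (a * k)) ^ 4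
        ≤ (2 * (L / (k:ℝ) ^ 7) ^ ((1:ℝ)/4)) ^ 4 := by
      rw [mul_pow, e1, e2, e4]
      exact hcore
    exact le_of_pow_le_pow_left₀ (n := 4) (by norm_num) hRHS0 hpow
  · -- second inequality
    have hlog : L < (k:ℝ) := by
      have := Real.log_le_sub_one_of_pos hk0
      linarith
    have h16 : L / (k:ℝ) ^ 7 < 1 / 16 := by
      rw [div_lt_div_iff₀ (by positivity) (by norm_num)]
      have h64 : (64:ℝ) ≤ (k:ℝ) ^ 6 := by
        calc (64:ℝ) = 2 ^ 6 := by norm_num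
          _ ≤ (k:ℝ) ^ 6 := pow_le_pow_left₀ (by norm_num) hk2 6
      nlinarith [hlog, hk0, h64]
    have hrp : (L / (k:ℝ) ^ 7) ^ ((1:ℝ)/4) < (1 / 16 : ℝ) ^ ((1:ℝ)/4) :=
      Real.rpow_lt_rpow hLk7 h16 (by norm_num)
    have h116 : ((1 / 16 : ℝ)) ^ ((1:ℝ)/4) = 1 / 2 := by
      rw [show (1 / 16 : ℝ) = (1 / 2 : ℝ) ^ ((4:ℕ):ℝ) by
          rw [Real.rpow_natCast]; norm_num,
        ← Real.rpow_mul (by norm_num)]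
      norm_num
    rw [h116] at hrp
    linarith
end

section
/- The function g(a) = e^{-(k/8)(a − √(a² − 2/k))²}·√(k·a·(a − √(a² − 2/k))), defined for real a ≥ √(2/k), attains its maximum at a = √(2/k), where its value equals √2·e^{-1/4}. -/
open Real

lemma key_aux (u : ℝ) (hu : 0 ≤ u) :
    Real.exp (-(u - 1) / 4) * Real.sqrt u ≤ Real.sqrt 2 * Real.exp (-(1 : ℝ) / 4) := by
  have h1 : u ≤ 2 * Real.exp ((u - 2) / 2) := by
    nlinarith [Real.add_one_le_exp ((u - 2) / 2)]
  have h2 : Real.sqrt u ≤ Real.sqrt 2 * Real.exp ((u - 2) / 4) := by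
    have : Real.sqrt u ≤ Real.sqrt (2 * Real.exp ((u - 2) / 2)) := Real.sqrt_le_sqrt h1
    calc Real.sqrt u ≤ Real.sqrt (2 * Real.exp ((u - 2) / 2)) := this
      _ = Real.sqrt 2 * Real.sqrt (Real.exp ((u - 2) / 2)) := Real.sqrt_mul (by norm_num) _
      _ = Real.sqrt 2 * Real.exp ((u - 2) / 4) := by
          congr 1
          rw [show (u - 2) / 2 = (u - 2) / 4 + (u - 2) / 4 by ring, Real.exp_add]
          exact Real.sqrt_mul_self (Real.exp_pos _).le
  calc Real.exp (-(u - 1) / 4) * Real.sqrt u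
      ≤ Real.exp (-(u - 1) / 4) * (Real.sqrt 2 * Real.exp ((u - 2) / 4)) := by
        exact mul_le_mul_of_nonneg_left h2 (Real.exp_pos _).le
    _ = Real.sqrt 2 * (Real.exp (-(u - 1) / 4) * Real.exp ((u - 2) / 4)) := by ring
    _ = Real.sqrt 2 * Real.exp (-(1 : ℝ) / 4) := by
        rw [← Real.exp_add]; congr 1; ring

/-- The function
`g(a) = e^{-(k/8)(a−√(a²−2/k))²}√(ka(a−√(a²−2/k)))`, for `a ≥ √(2/k)`, is maximized at
`a = √(2/k)`, where it equals `√2·e^{-1/4}`. -/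
theorem interior_max_value (k : ℕ) (hk : 0 < k) :
    (∀ a : ℝ, Real.sqrt (2 / k) ≤ a →
      Real.exp (-((k : ℝ) / 8) * (a - Real.sqrt (a ^ 2 - 2 / k)) ^ 2) *
          Real.sqrt ((k : ℝ) * a * (a - Real.sqrt (a ^ 2 - 2 / k))) ≤
        Real.sqrt 2 * Real.exp (-(1 : ℝ) / 4)) ∧
    (Real.exp (-((k : ℝ) / 8) *
          (Real.sqrt (2 / k) - Real.sqrt ((Real.sqrt (2 / k)) ^ 2 - 2 / k)) ^ 2) *
        Real.sqrt ((k : ℝ) * Real.sqrt (2 / k) *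
          (Real.sqrt (2 / k) - Real.sqrt ((Real.sqrt (2 / k)) ^ 2 - 2 / k))) =
      Real.sqrt 2 * Real.exp (-(1 : ℝ) / 4)) := by
  have hk0 : (0 : ℝ) < k := by exact_mod_cast hk
  have hk0' : (k : ℝ) ≠ 0 := ne_of_gt hk0
  have h2k : (0 : ℝ) ≤ 2 / k := by positivity
  constructor
  · intro a ha
    have ha0 : 0 ≤ a := le_trans (Real.sqrt_nonneg _) ha
    have ha2 : 2 / (k : ℝ) ≤ a ^ 2 := by
      have := Real.sq_sqrt h2k
      nlinarith [Real.sqrt_nonneg (2 / (k : ℝ))]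
    set s := Real.sqrt (a ^ 2 - 2 / k) with hs
    have hs2 : s ^ 2 = a ^ 2 - 2 / k := Real.sq_sqrt (by linarith)
    have hsa : s ≤ a := by
      have : s ≤ Real.sqrt (a ^ 2) := Real.sqrt_le_sqrt (by linarith)
      rwa [Real.sqrt_sq ha0] at this
    set u := (k : ℝ) * a * (a - s) with hu
    have hu0 : 0 ≤ u := by
      apply mul_nonneg (mul_nonneg hk0.le ha0); linarith
    have hexp : -((k : ℝ) / 8) * (a - s) ^ 2 = -(u - 1) / 4 := by
      have h4 : (k : ℝ) * (2 / k) = 2 := by field_simp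
      nlinarith [hs2]
    rw [hexp]
    exact key_aux u hu0
  · have h1 : (Real.sqrt (2 / k)) ^ 2 - 2 / (k : ℝ) = 0 := by
      rw [Real.sq_sqrt h2k]; ring
    rw [h1, Real.sqrt_zero, sub_zero]
    have h2 : (Real.sqrt (2 / k)) ^ 2 = 2 / (k : ℝ) := Real.sq_sqrt h2k
    have h3 : (k : ℝ) * Real.sqrt (2 / k) * Real.sqrt (2 / k) = 2 := by
      rw [mul_assoc, ← Real.sq_sqrt h2k]; field_simp
      rw [Real.sq_sqrt (sq_nonneg _), h2]; field_simp
    have h4 : -((k : ℝ) / 8) * (Real.sqrt (2 / k)) ^ 2 = -(1 : ℝ) / 4 := by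
      rw [h2]; field_simp; ring
    rw [h3, h4, mul_comm]
end
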